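/- Let n ∈ ℕ and α a partition of n. The restrictions of the irreducible characters χ^λ of S_n, for λ ≥ α, to the conjugacy classes of cycle type μ ≥ α, form a ℤ-basis for the ℤ-span of all restrictions χ^λ|_{classes ≥ α}, λ ∈ P(n). The same holds for the permutation characters ξ^λ, λ ≥ α. -/

import Mathlib

open scoped Classical

namespace SnTable

variable {n : ℕ}

/-- The parts of a partition, listed in weakly decreasing order. -/
def descList (μ : Nat.Partition n) : List ℕ := (μ.parts.sort (· ≤ ·)).reverse

/-- Strict lexicographic order on partitions of `n` (comparing the lists of parts
written in decreasing order). -/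
def plex (μ ν : Nat.Partition n) : Prop := List.Lex (· < ·) (descList μ) (descList ν)

/-- Weak lexicographic order on partitions of `n`. -/
def plexLE (μ ν : Nat.Partition n) : Prop := μ = ν ∨ plex μ ν

/-- `a_μ = ∏ i^{m_i(μ)}`, the product of the parts of `μ`. -/
def aNum (μ : Nat.Partition n) : ℕ := μ.parts.prod

/-- `b_μ = ∏ m_i(μ)!`, the product of the factorials of the multiplicities. -/
def bNum (μ : Nat.Partition n) : ℕ :=
  ∏ i ∈ μ.parts.toFinset, (μ.parts.count i).factorial

/-- `z_μ = a_μ b_μ`, the centralizer order of an element of cycle type `μ` in `S_n`. -/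
def zNum (μ : Nat.Partition n) : ℕ := aNum μ * bNum μ

/-- sort a multiset of naturals in weakly decreasing order -/
def sortDesc (m : Multiset ℕ) : List ℕ := (m.sort (· ≤ ·)).reverse

theorem descList_eq_sortDesc (μ : Nat.Partition n) : descList μ = sortDesc μ.parts := rfl

theorem sortDesc_coe (m : Multiset ℕ) : ((sortDesc m : List ℕ) : Multiset ℕ) = m := by
  unfold sortDesc
  rw [← Multiset.coe_reverse, List.reverse_reverse, Multiset.sort_eq]

theorem descList_coe (μ : Nat.Partition n) : ((descList μ : List ℕ) : Multiset ℕ) = μ.parts :=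
  sortDesc_coe _

theorem descList_injective : Function.Injective (descList (n := n)) := by
  intro μ ν h
  ext1
  rw [← descList_coe μ, ← descList_coe ν, h]

theorem sortDesc_sorted (m : Multiset ℕ) : (sortDesc m).Pairwise (· ≥ ·) := by
  unfold sortDesc
  rw [List.pairwise_reverse]
  exact (Multiset.pairwise_sort (s := m) (r := (· ≤ ·))).imp fun {a b} hab => hab

theorem sortDesc_eq {m : Multiset ℕ} {l : List ℕ} (hs : l.Pairwise (· ≥ ·))
    (hc : (l : Multiset ℕ) = m) : sortDesc m = l :=
  List.Perm.eq_of_pairwise' (sortDesc_sorted m) hs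
    (Multiset.coe_eq_coe.1 ((sortDesc_coe m).trans hc.symm))

theorem sortDesc_zero : sortDesc 0 = [] := by
  simp [sortDesc]

theorem sortDesc_cons_of_max {m : Multiset ℕ} {M : ℕ} (hM : M ∈ m) (hmax : ∀ y ∈ m, y ≤ M) :
    sortDesc m = M :: sortDesc (m.erase M) := by
  refine sortDesc_eq ?_ ?_
  · rw [List.pairwise_cons]
    refine ⟨fun b hb => ?_, sortDesc_sorted _⟩
    have : b ∈ (m.erase M) := by
      rw [← sortDesc_coe (m.erase M)]; exact_mod_cast hb
    exact hmax b (Multiset.mem_of_mem_erase this)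
  · show (M ::ₘ (sortDesc (m.erase M) : Multiset ℕ)) = m
    rw [sortDesc_coe, Multiset.cons_erase hM]

theorem exists_max {m : Multiset ℕ} (hm : m ≠ 0) : ∃ M, M ∈ m ∧ ∀ y ∈ m, y ≤ M := by
  have hne : m.toFinset.Nonempty := by
    rw [Multiset.toFinset_nonempty]; exact hm
  exact ⟨m.toFinset.max' hne, Multiset.mem_toFinset.1 (m.toFinset.max'_mem hne),
    fun y hy => Finset.le_max' _ _ (Multiset.mem_toFinset.2 hy)⟩

theorem merge_lex (P : Multiset (Multiset ℕ)) :
    (∀ m ∈ P, ∀ x ∈ m, 0 < x) →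
    sortDesc P.join = sortDesc (P.map Multiset.sum) ∨
      List.Lex (· < ·) (sortDesc P.join) (sortDesc (P.map Multiset.sum)) := by
  induction P using Multiset.strongInductionOn with
  | ih P IH =>
  intro hpos
  rcases eq_or_ne P 0 with rfl | hP
  · left; simp
  have hb0 : P.map Multiset.sum ≠ 0 := by simpa using hP
  obtain ⟨B, hBmem, hBmax⟩ := exists_max hb0
  rcases eq_or_ne P.join 0 with hm | hm
  · right
    rw [hm, sortDesc_zero, sortDesc_cons_of_max hBmem hBmax]
    exact List.Lex.nil
  obtain ⟨M, hMmem, hMmax⟩ := exists_max hm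
  obtain ⟨G, hGP, hMG⟩ := Multiset.mem_join.1 hMmem
  have hGsum_mem : G.sum ∈ P.map Multiset.sum := Multiset.mem_map_of_mem _ hGP
  have hMG' : M ≤ G.sum := Multiset.single_le_sum (fun x _ => Nat.zero_le x) M hMG
  have hMB : M ≤ B := le_trans hMG' (hBmax _ hGsum_mem)
  rcases lt_or_eq_of_le hMB with hlt | heq
  · right
    rw [sortDesc_cons_of_max hMmem hMmax, sortDesc_cons_of_max hBmem hBmax]
    exact List.Lex.rel hlt
  · have hGsum : G.sum = M := le_antisymm (by
        calc G.sum ≤ B := hBmax _ hGsum_mem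
        _ = M := heq.symm) hMG'
    have hG : G = {M} := by
      have h1 : G = M ::ₘ G.erase M := (Multiset.cons_erase hMG).symm
      have h2 : (G.erase M).sum = 0 := by
        have h3 := congrArg Multiset.sum h1
        rw [Multiset.sum_cons, hGsum] at h3
        omega
      have h4 : G.erase M = 0 := by
        rw [Multiset.sum_eq_zero_iff] at h2
        rw [Multiset.eq_zero_iff_forall_notMem]
        intro x hx
        have hx0 := h2 x hx
        have := hpos G hGP x (Multiset.mem_of_mem_erase hx)
        omega
      rw [h1, h4]; rfl
    set P' := P.erase G with hP'
    have hPP : P = G ::ₘ P' := (Multiset.cons_erase hGP).symm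
    have hjoin : P.join = M ::ₘ P'.join := by
      rw [hPP, Multiset.join_cons, hG, Multiset.singleton_add]
    have hbmap : P.map Multiset.sum = M ::ₘ P'.map Multiset.sum := by
      rw [hPP, Multiset.map_cons, hGsum]
    rw [sortDesc_cons_of_max hMmem hMmax, sortDesc_cons_of_max hBmem hBmax]
    have e1 : P.join.erase M = P'.join := by rw [hjoin, Multiset.erase_cons_head]
    have e2 : (P.map Multiset.sum).erase B = P'.map Multiset.sum := by
      rw [hbmap, ← heq, Multiset.erase_cons_head]
    rw [e1, e2, ← heq]
    have hlt' : P' < P := by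
      rw [hPP]; exact Multiset.lt_cons_self _ _
    have hpos' : ∀ m ∈ P', ∀ x ∈ m, 0 < x := fun m hm =>
      hpos m (by rw [hPP]; exact Multiset.mem_cons_of_mem hm)
    rcases IH P' hlt' hpos' with h | h
    · left; rw [h]
    · right; exact List.Lex.cons h



/-- The cycle type of a permutation of `Fin n`, as a partition of `n`. -/
def cycleTypePartition (g : Equiv.Perm (Fin n)) : Nat.Partition n :=
  (Fintype.card_fin n) ▸ g.partition

/-- The value at `g` of the permutation character `ξ^λ` of `S_n` obtained by inducing the
trivial character from the Young subgroup `S_λ`: it counts the ordered set partitions of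
`Fin n` with block sizes `λ₁ ≥ λ₂ ≥ …` that are fixed by `g`. -/
def permChar (lam : Nat.Partition n) (g : Equiv.Perm (Fin n)) : ℕ :=
  Fintype.card {f : Fin n → Fin (descList lam).length //
    (∀ x, f (g x) = f x) ∧
    ∀ j, (Finset.univ.filter fun x => f x = j).card = (descList lam).get j}

theorem cast_parts {m k : ℕ} (h : m = k) (p : Nat.Partition m) :
    (h ▸ p : Nat.Partition k).parts = p.parts := by subst h; rfl

theorem parts_cycleTypePartition (g : Equiv.Perm (Fin n)) :
    (cycleTypePartition g).parts
      = g.cycleType + Multiset.replicate (n - g.support.card) 1 := by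
  rw [cycleTypePartition, cast_parts, Equiv.Perm.parts_partition, Fintype.card_fin]

/-- The permutation acting as `g` on the fiber of `j` under `f` and identity elsewhere. -/
def restrictPerm (g : Equiv.Perm (Fin n)) {L : ℕ} (f : Fin n → Fin L)
    (hf : ∀ x, f (g x) = f x) (j : Fin L) : Equiv.Perm (Fin n) where
  toFun x := if f x = j then g x else x
  invFun x := if f x = j then g⁻¹ x else x
  left_inv x := by
    by_cases h : f x = j
    · simp [h, hf x]
    · simp [h]
  right_inv x := by
    by_cases h : f x = j
    · have : f (g⁻¹ x) = f x := by
        rw [Equiv.Perm.inv_def]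
        conv_rhs => rw [← Equiv.apply_symm_apply g x, hf]
      rw [Equiv.Perm.inv_def] at this
      simp [h, this]
    · simp [h]

theorem restrictPerm_apply (g : Equiv.Perm (Fin n)) {L : ℕ} (f : Fin n → Fin L)
    (hf : ∀ x, f (g x) = f x) (j : Fin L) (x : Fin n) :
    restrictPerm g f hf j x = if f x = j then g x else x := rfl

theorem restrictPerm_apply_of_ne (g : Equiv.Perm (Fin n)) {L : ℕ} {f : Fin n → Fin L}
    (hf : ∀ x, f (g x) = f x) {j : Fin L} {x : Fin n} (h : f x ≠ j) :
    restrictPerm g f hf j x = x := by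
  rw [restrictPerm_apply, if_neg h]

theorem restrictPerm_disjoint (g : Equiv.Perm (Fin n)) {L : ℕ} (f : Fin n → Fin L)
    (hf : ∀ x, f (g x) = f x) {i j : Fin L} (hij : i ≠ j) :
    Equiv.Perm.Disjoint (restrictPerm g f hf i) (restrictPerm g f hf j) := by
  intro x
  by_cases h : f x = i
  · right
    refine restrictPerm_apply_of_ne g hf fun hc => hij ?_
    rw [← h, ← hc]
  · left; exact restrictPerm_apply_of_ne g hf h

theorem restrictPerm_support (g : Equiv.Perm (Fin n)) {L : ℕ} (f : Fin n → Fin L)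
    (hf : ∀ x, f (g x) = f x) (j : Fin L) :
    (restrictPerm g f hf j).support ⊆ Finset.univ.filter fun x => f x = j := by
  intro x hx
  rw [Equiv.Perm.mem_support] at hx
  rw [Finset.mem_filter]
  refine ⟨Finset.mem_univ x, ?_⟩
  by_contra h
  exact hx (restrictPerm_apply_of_ne g hf h)

theorem restrictPerm_noncommProd (g : Equiv.Perm (Fin n)) {L : ℕ} (f : Fin n → Fin L)
    (hf : ∀ x, f (g x) = f x)
    (comm : ∀ s : Finset (Fin L),
      Set.Pairwise s fun i j => Commute (restrictPerm g f hf i) (restrictPerm g f hf j)) :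
    ∀ s : Finset (Fin L), ∀ x,
      (s.noncommProd (restrictPerm g f hf) (comm s)) x = if f x ∈ s then g x else x := by
  intro s
  induction s using Finset.induction_on with
  | empty => intro x; simp
  | @insert a s ha ih =>
    intro x
    rw [Finset.noncommProd_insert_of_notMem _ _ _ _ ha]
    have hx' := ih x
    by_cases h : f x ∈ s
    · rw [Equiv.Perm.mul_apply, hx', if_pos h]
      have hfg : f (g x) = f x := hf x
      rw [restrictPerm_apply_of_ne g hf (by rw [hfg]; exact fun hc => ha (hc ▸ h))]
      rw [if_pos (Finset.mem_insert_of_mem h)]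
    · rw [Equiv.Perm.mul_apply, hx', if_neg h]
      by_cases h2 : f x = a
      · rw [restrictPerm_apply, if_pos h2, if_pos (by rw [h2]; exact Finset.mem_insert_self a s)]
      · rw [restrictPerm_apply_of_ne g hf h2, if_neg (by simp [h, h2])]


theorem sum_replicate_one {ι : Type*} (s : Finset ι) (k : ι → ℕ) :
    (∑ i ∈ s, Multiset.replicate (k i) (1:ℕ)) = Multiset.replicate (∑ i ∈ s, k i) 1 := by
  classical
  induction s using Finset.induction_on with
  | empty => simp
  | @insert a s ha ih =>
    rw [Finset.sum_insert ha, Finset.sum_insert ha, ih, Multiset.replicate_add]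

theorem sum_multiset_sum {ι : Type*} (s : Finset ι) (k : ι → Multiset ℕ) :
    (∑ i ∈ s, k i).sum = ∑ i ∈ s, (k i).sum := by
  classical
  induction s using Finset.induction_on with
  | empty => simp
  | @insert a s ha ih =>
    rw [Finset.sum_insert ha, Finset.sum_insert ha, Multiset.sum_add, ih]

theorem plexLE_of_permChar_ne_zero {g : Equiv.Perm (Fin n)} {ν : Nat.Partition n}
    (h : permChar ν g ≠ 0) : plexLE (cycleTypePartition g) ν := by
  classical
  have hne : Nonempty {f : Fin n → Fin (descList ν).length //
      (∀ x, f (g x) = f x) ∧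
      ∀ j, (Finset.univ.filter fun x => f x = j).card = (descList ν).get j} := by
    rw [permChar] at h
    exact Fintype.card_pos_iff.1 (Nat.pos_of_ne_zero h)
  obtain ⟨⟨f, hf1, hf2⟩⟩ := hne
  set rp := restrictPerm g f hf1 with hrp
  have hdisj : Set.Pairwise (Finset.univ : Finset (Fin (descList ν).length)) fun i j =>
      Equiv.Perm.Disjoint (rp i) (rp j) :=
    fun i _ j _ hij => restrictPerm_disjoint g f hf1 hij
  have hcomm : ∀ s : Finset (Fin (descList ν).length), Set.Pairwise s fun i j => Commute (rp i) (rp j) :=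
    fun s i _ j _ hij => (restrictPerm_disjoint g f hf1 hij).commute
  have hgprod : Finset.univ.noncommProd rp (hcomm _) = g := by
    ext x
    rw [restrictPerm_noncommProd g f hf1 hcomm Finset.univ x, if_pos (Finset.mem_univ _)]
  have hct : g.cycleType = ∑ j, (rp j).cycleType := by
    rw [← hgprod]
    exact Equiv.Perm.Disjoint.cycleType_noncommProd hdisj
  set c : Fin (descList ν).length → ℕ := fun j => (Finset.univ.filter fun x => f x = j).card with hc
  have hsupp_le : ∀ j, (rp j).support.card ≤ c j :=
    fun j => Finset.card_le_card (restrictPerm_support g f hf1 j)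
  have hsum_c : ∑ j, c j = n := by
    rw [← Finset.card_eq_sum_card_fiberwise (fun x _ => Finset.mem_univ (f x))]
    simp
  have hsum_s : ∑ j, (rp j).support.card = g.support.card := by
    calc ∑ j, (rp j).support.card = ∑ j, (rp j).cycleType.sum := by
          simp [Equiv.Perm.sum_cycleType]
    _ = (∑ j, (rp j).cycleType).sum := (sum_multiset_sum _ _).symm
    _ = g.cycleType.sum := by rw [← hct]
    _ = g.support.card := Equiv.Perm.sum_cycleType g
  set pj : Fin (descList ν).length → Multiset ℕ :=
    fun j => (rp j).cycleType + Multiset.replicate (c j - (rp j).support.card) 1 with hpj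
  set P : Multiset (Multiset ℕ) := Finset.univ.val.map pj with hP
  have hjoinsum : P.join = ∑ j, pj j := rfl
  have hjoin : P.join = (cycleTypePartition g).parts := by
    rw [parts_cycleTypePartition, hjoinsum, Finset.sum_add_distrib, ← hct,
      sum_replicate_one, Finset.sum_tsub_distrib _ (fun j _ => hsupp_le j), hsum_c, hsum_s]
  have hmap : P.map Multiset.sum = ν.parts := by
    rw [hP, Multiset.map_map]
    have hpj_sum : ∀ j, (pj j).sum = c j := by
      intro j
      rw [hpj]
      simp only [Multiset.sum_add, Multiset.sum_replicate, smul_eq_mul, mul_one,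
        Equiv.Perm.sum_cycleType]
      exact Nat.add_sub_cancel' (hsupp_le j)
    have : (Multiset.sum ∘ pj) = c := funext hpj_sum
    rw [Function.comp_def]
    simp only [hpj_sum]
    have hcg : c = (descList ν).get := funext hf2
    rw [hcg, Fin.univ_def]
    show ((List.finRange (descList ν).length).map (descList ν).get : Multiset ℕ) = ν.parts
    rw [List.map_get_finRange (descList ν), descList_coe]
  have hpos : ∀ m ∈ P, ∀ x ∈ m, 0 < x := by
    intro m hm x hx
    rw [hP, Multiset.mem_map] at hm
    obtain ⟨j, _, rfl⟩ := hm
    rw [hpj] at hx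
    rcases Multiset.mem_add.1 hx with hx | hx
    · exact lt_of_lt_of_le (by norm_num) (Equiv.Perm.two_le_of_mem_cycleType hx)
    · rw [Multiset.eq_of_mem_replicate hx]; norm_num
  have hml := merge_lex P hpos
  rw [hjoin, hmap] at hml
  rcases hml with h | h
  · left
    exact descList_injective
      (by rw [descList_eq_sortDesc, descList_eq_sortDesc]; exact h)
  · right
    rw [plex, descList_eq_sortDesc, descList_eq_sortDesc]
    exact h


def atomOf (g : Equiv.Perm (Fin n)) (x : Fin n) : Finset (Fin n) :=
  if x ∈ g.support then (g.cycleOf x).support else {x}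

theorem mem_atomOf (g : Equiv.Perm (Fin n)) (x : Fin n) : x ∈ atomOf g x := by
  rw [atomOf]
  by_cases h : x ∈ g.support
  · rw [if_pos h]
    exact Equiv.Perm.mem_support_cycleOf_iff.2 ⟨Equiv.Perm.SameCycle.refl g x, h⟩
  · rw [if_neg h]; exact Finset.mem_singleton_self x

theorem atomOf_apply (g : Equiv.Perm (Fin n)) (x : Fin n) : atomOf g (g x) = atomOf g x := by
  rw [atomOf, atomOf]
  by_cases h : x ∈ g.support
  · rw [if_pos h, if_pos (Equiv.Perm.apply_mem_support.2 h), Equiv.Perm.cycleOf_self_apply]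
  · have hx : g x = x := Equiv.Perm.notMem_support.1 h
    rw [hx]

theorem atomOf_eq_of_mem (g : Equiv.Perm (Fin n)) {x y : Fin n} (hy : y ∈ atomOf g x) :
    atomOf g y = atomOf g x := by
  rw [atomOf] at hy
  by_cases h : x ∈ g.support
  · rw [if_pos h] at hy
    obtain ⟨hsc, -⟩ := Equiv.Perm.mem_support_cycleOf_iff.1 hy
    have hy' : y ∈ g.support := (hsc.mem_support_iff).1 h
    rw [atomOf, if_pos hy', atomOf, if_pos h, hsc.cycleOf_eq]
  · rw [if_neg h, Finset.mem_singleton] at hy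
    rw [hy]

theorem atoms_card_map (g : Equiv.Perm (Fin n)) :
    ((Finset.univ.image (atomOf g)).val.map Finset.card) = (cycleTypePartition g).parts := by
  classical
  set Acyc := g.cycleFactorsFinset.image Equiv.Perm.support with hAcyc
  set Afix := g.supportᶜ.image (fun x => ({x} : Finset (Fin n))) with hAfix
  have h2le : ∀ a ∈ Acyc, 2 ≤ a.card := by
    intro a ha
    obtain ⟨c, hc, rfl⟩ := Finset.mem_image.1 ha
    exact (Equiv.Perm.mem_cycleFactorsFinset_iff.1 hc).1.two_le_card_support
  have h1 : ∀ a ∈ Afix, a.card = 1 := by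
    intro a ha
    obtain ⟨x, _, rfl⟩ := Finset.mem_image.1 ha
    exact Finset.card_singleton x
  have hdisj : Disjoint Acyc Afix := Finset.disjoint_left.2 fun {a} ha hb => by
    have := h2le a ha; have := h1 a hb; omega
  have hA : Finset.univ.image (atomOf g) = Acyc.disjUnion Afix hdisj := by
    ext a
    rw [Finset.mem_disjUnion]
    constructor
    · intro ha
      obtain ⟨x, -, rfl⟩ := Finset.mem_image.1 ha
      by_cases h : x ∈ g.support
      · left
        rw [atomOf, if_pos h]
        exact Finset.mem_image_of_mem _ (Equiv.Perm.cycleOf_mem_cycleFactorsFinset_iff.2 h)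
      · right
        rw [atomOf, if_neg h]
        exact Finset.mem_image_of_mem _ (Finset.mem_compl.2 h)
    · rintro (ha | ha)
      · obtain ⟨c, hc, rfl⟩ := Finset.mem_image.1 ha
        have hcyc := (Equiv.Perm.mem_cycleFactorsFinset_iff.1 hc).1
        obtain ⟨x, hx⟩ := Finset.card_pos.1 (lt_of_lt_of_le two_pos hcyc.two_le_card_support)
        have hxg : x ∈ g.support := by
          rw [Equiv.Perm.mem_support, ← (Equiv.Perm.mem_cycleFactorsFinset_iff.1 hc).2 x hx]
          exact Equiv.Perm.mem_support.1 hx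
        refine Finset.mem_image.2 ⟨x, Finset.mem_univ x, ?_⟩
        rw [atomOf, if_pos hxg, ← Equiv.Perm.cycle_is_cycleOf hx hc]
      · obtain ⟨x, hx, rfl⟩ := Finset.mem_image.1 ha
        exact Finset.mem_image.2 ⟨x, Finset.mem_univ x,
          by rw [atomOf, if_neg (Finset.mem_compl.1 hx)]⟩
  have hinj1 : Set.InjOn Equiv.Perm.support (↑g.cycleFactorsFinset : Set (Equiv.Perm (Fin n))) := by
    intro c1 hc1 c2 hc2 he
    have hcyc := (Equiv.Perm.mem_cycleFactorsFinset_iff.1 hc1).1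
    obtain ⟨x, hx⟩ := Finset.card_pos.1 (lt_of_lt_of_le two_pos hcyc.two_le_card_support)
    rw [Equiv.Perm.cycle_is_cycleOf hx hc1, Equiv.Perm.cycle_is_cycleOf (he ▸ hx) hc2]
  have hinj2 : Set.InjOn (fun x => ({x} : Finset (Fin n))) (↑g.supportᶜ : Set (Fin n)) := by
    intro x _ y _ he
    simpa using he
  calc (Finset.univ.image (atomOf g)).val.map Finset.card
      = (Acyc.disjUnion Afix hdisj).val.map Finset.card := by rw [hA]
    _ = Acyc.val.map Finset.card + Afix.val.map Finset.card :=
        Multiset.map_add _ _ _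
    _ = g.cycleType + Multiset.replicate (n - g.support.card) 1 := by
        rw [hAcyc, hAfix, Finset.image_val_of_injOn hinj1, Finset.image_val_of_injOn hinj2,
          Multiset.map_map, Multiset.map_map]
        congr 1
        · have he : (Finset.card ∘ fun x => ({x} : Finset (Fin n))) = fun _ => 1 :=
            funext fun x => Finset.card_singleton x
          rw [he, Multiset.map_const']
          congr 1
          rw [← Finset.card_def, Finset.card_compl, Fintype.card_fin]
    _ = (cycleTypePartition g).parts := (parts_cycleTypePartition g).symm

theorem exists_list_of_map_eq {α : Type*} [DecidableEq α] :
    ∀ (l : List ℕ) (s : Finset α) (u : α → ℕ), s.val.map u = ↑l →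
      ∃ t : List α, t.Nodup ∧ ↑t = s.val ∧ t.map u = l := by
  intro l
  induction l with
  | nil =>
    intro s u h
    have : s.val = 0 := by
      have h0 : s.val.map u = 0 := by rw [h]; rfl
      exact Multiset.map_eq_zero.1 h0
    exact ⟨[], List.nodup_nil, by simp [this], by simp⟩
  | cons a l ih =>
    intro s u h
    have ha : a ∈ s.val.map u := by rw [h]; exact List.mem_cons_self
    obtain ⟨x, hx, hux⟩ := Multiset.mem_map.1 ha
    have hs : s.val = x ::ₘ (s.erase x).val := by
      rw [Finset.erase_val, Multiset.cons_erase hx]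
    have h' : (s.erase x).val.map u = ↑l := by
      have h2 : (a ::ₘ (s.erase x).val.map u) = (a ::ₘ (l : Multiset ℕ)) := by
        rw [← hux, ← Multiset.map_cons, ← hs, h, hux]
        rw [Multiset.cons_coe]
      exact (Multiset.cons_inj_right a).1 h2
    obtain ⟨t, hnd, hcoe, hmap⟩ := ih (s.erase x) u h'
    refine ⟨x :: t, ?_, ?_, ?_⟩
    · rw [List.nodup_cons]
      refine ⟨fun hc => Finset.notMem_erase x s ?_, hnd⟩
      rw [Finset.mem_def, ← hcoe]
      exact Multiset.mem_coe.2 hc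
    · show (x ::ₘ (t : Multiset α)) = s.val
      rw [hcoe, ← hs]
    · simp [hmap, hux]


theorem permChar_self_ne_zero {g : Equiv.Perm (Fin n)} {lam : Nat.Partition n}
    (hg : cycleTypePartition g = lam) : permChar lam g ≠ 0 := by
  classical
  have hparts : (Finset.univ.image (atomOf g)).val.map Finset.card = ↑(descList lam) := by
    rw [atoms_card_map, hg, descList_coe]
  obtain ⟨t, hnd, hcoe, hmap⟩ := exists_list_of_map_eq (descList lam) _ Finset.card hparts
  have hlen : t.length = (descList lam).length := by rw [← hmap, List.length_map]
  have hmem : ∀ x, atomOf g x ∈ t := fun x => by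
    rw [← Multiset.mem_coe, hcoe, ← Finset.mem_def]
    exact Finset.mem_image_of_mem _ (Finset.mem_univ x)
  set F : Fin n → Fin (descList lam).length := fun x =>
    ⟨t.idxOf (atomOf g x), hlen ▸ List.idxOf_lt_length_iff.2 (hmem x)⟩ with hF
  have hF1 : ∀ x, F (g x) = F x := fun x => by
    simp only [hF]
    congr 1
    rw [atomOf_apply]
  have hF2 : ∀ j, (Finset.univ.filter fun x => F x = j).card = (descList lam).get j := by
    intro j
    have hjt : (j : ℕ) < t.length := by rw [hlen]; exact j.2
    have key : (Finset.univ.filter fun x => F x = j) = t.get ⟨j, hjt⟩ := by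
      ext x
      simp only [Finset.mem_filter, Finset.mem_univ, true_and]
      constructor
      · intro hx
        have hidx : t.idxOf (atomOf g x) = (j : ℕ) := congrArg Fin.val hx
        have hax : atomOf g x = t.get ⟨j, hjt⟩ := by
          have := List.idxOf_get (a := atomOf g x) (l := t)
            (by rw [hidx]; exact hjt)
          rw [← this]
          congr 1
          exact Fin.ext hidx
        rw [← hax]
        exact mem_atomOf g x
      · intro hx
        have hmem' : t.get ⟨j, hjt⟩ ∈ Finset.univ.image (atomOf g) := by
          rw [Finset.mem_def, ← hcoe]
          exact Multiset.mem_coe.2 (t.get_mem _)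
        obtain ⟨y, -, hy⟩ := Finset.mem_image.1 hmem'
        have hax : atomOf g x = t.get ⟨j, hjt⟩ := by
          rw [← hy] at hx ⊢
          exact atomOf_eq_of_mem g hx
        apply Fin.ext
        show t.idxOf (atomOf g x) = (j : ℕ)
        rw [hax]
        exact List.get_idxOf hnd ⟨j, hjt⟩
    rw [key]
    have hg2 := List.get_of_eq hmap ⟨(j : ℕ), by rw [List.length_map]; exact hjt⟩
    simp only [List.get_eq_getElem, List.getElem_map] at hg2 ⊢
    exact hg2
  have hcard : 0 < permChar lam g := by
    rw [permChar]
    exact Fintype.card_pos_iff.2 ⟨⟨F, hF1, hF2⟩⟩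
  omega


noncomputable instance : LinearOrder (Nat.Partition n) :=
  LinearOrder.lift' descList descList_injective

theorem lt_iff_plex {μ ν : Nat.Partition n} : μ < ν ↔ plex μ ν := Iff.rfl

theorem plexLE_iff_le {μ ν : Nat.Partition n} : plexLE μ ν ↔ μ ≤ ν := by
  rw [le_iff_lt_or_eq, plexLE]
  rw [lt_iff_plex]
  tauto

theorem solve_triangular_max {ι : Type*} [Fintype ι] [LinearOrder ι] (M : ι → ι → ℤ)
    (hd : ∀ i, M i i ≠ 0) (htri : ∀ i j, M i j ≠ 0 → j ≤ i) (c : ι → ℤ)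
    (hc : ∀ j, ∑ i, c i * M i j = 0) : ∀ i, c i = 0 := by
  classical
  by_contra hne
  push_neg at hne
  obtain ⟨i1, hi1⟩ := hne
  set s := Finset.univ.filter (fun i => c i ≠ 0) with hs
  have hsne : s.Nonempty := ⟨i1, by simp [hs, hi1]⟩
  set i0 := s.max' hsne with hi0
  have hci0 : c i0 ≠ 0 := (Finset.mem_filter.1 (s.max'_mem hsne)).2
  have h0 := hc i0
  rw [Finset.sum_eq_single i0] at h0
  · rcases mul_eq_zero.1 h0 with h | h
    · exact hci0 h
    · exact hd i0 h
  · intro b _ hb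
    by_cases hcb : c b = 0
    · rw [hcb, zero_mul]
    · by_cases hMb : M b i0 = 0
      · rw [hMb, mul_zero]
      · exact absurd (le_antisymm (Finset.le_max' s b (by simp [hs, hcb])) (htri b i0 hMb)) hb
  · intro h
    exact absurd (Finset.mem_univ i0) h

theorem solve_triangular_min {ι : Type*} [Fintype ι] [LinearOrder ι] (M : ι → ι → ℤ)
    (hd : ∀ i, M i i ≠ 0) (htri : ∀ i j, M i j ≠ 0 → i ≤ j) (c : ι → ℤ)
    (hc : ∀ j, ∑ i, c i * M i j = 0) : ∀ i, c i = 0 := by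
  classical
  by_contra hne
  push_neg at hne
  obtain ⟨i1, hi1⟩ := hne
  set s := Finset.univ.filter (fun i => c i ≠ 0) with hs
  have hsne : s.Nonempty := ⟨i1, by simp [hs, hi1]⟩
  set i0 := s.min' hsne with hi0
  have hci0 : c i0 ≠ 0 := (Finset.mem_filter.1 (s.min'_mem hsne)).2
  have h0 := hc i0
  rw [Finset.sum_eq_single i0] at h0
  · rcases mul_eq_zero.1 h0 with h | h
    · exact hci0 h
    · exact hd i0 h
  · intro b _ hb
    by_cases hcb : c b = 0
    · rw [hcb, zero_mul]
    · by_cases hMb : M b i0 = 0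
      · rw [hMb, mul_zero]
      · exact absurd (le_antisymm (htri b i0 hMb) (Finset.min'_le s b (by simp [hs, hcb]))) hb
  · intro h
    exact absurd (Finset.mem_univ i0) h



/-- `X` is the character table of the symmetric group `S_n`, with rows and columns indexed
by the partitions of `n`: each row is an irreducible character (as a class function, via
cycle types), distinct rows are distinct characters, and the labelling is the standard one,
pinned down by the fact that the transition matrix expressing the Young permutation
characters `ξ^λ` in terms of the rows of `X` is unitriangular with respect to the
lexicographic order. -/
def IsCharTable (X : Nat.Partition n → Nat.Partition n → ℤ) : Prop :=
  (∀ lam : Nat.Partition n, ∃ V : FDRep ℂ (Equiv.Perm (Fin n)),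
      CategoryTheory.Simple V ∧
      ∀ g : Equiv.Perm (Fin n), V.character g = (X lam (cycleTypePartition g) : ℂ)) ∧
  (∃ d : Nat.Partition n → Nat.Partition n → ℤ,
      (∀ lam, d lam lam = 1) ∧
      (∀ lam mu, d lam mu ≠ 0 → plexLE lam mu) ∧
      (∀ lam (g : Equiv.Perm (Fin n)),
        (permChar lam g : ℤ) = ∑ mu, d lam mu * X mu (cycleTypePartition g))) ∧
  Function.Injective X


/-- **Corollary 3.2.** For a partition `α` of `n`, the restrictions of the irreducible characters
`χ^λ` of `S_n`, for `λ ≥ α`, to the conjugacy classes of cycle type `μ ≥ α`, form a ℤ-basis for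
the ℤ-span of the restrictions of all the `χ^λ`, `λ ∈ P(n)`; and the same holds for the Young
permutation characters `ξ^λ`, `λ ≥ α`.  (Here `T` is a transversal picking a permutation of each
cycle type, used to evaluate the permutation characters on classes.) -/
theorem large_basic_sets (n : ℕ) (X : Nat.Partition n → Nat.Partition n → ℤ)
    (hX : IsCharTable X) (α : Nat.Partition n)
    (T : Nat.Partition n → Equiv.Perm (Fin n))
    (hT : ∀ μ : Nat.Partition n, cycleTypePartition (T μ) = μ)
    (Xi : Nat.Partition n → Nat.Partition n → ℤ)
    (hXi : Xi = fun lam μ => (permChar lam (T μ) : ℤ)) :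
    ((LinearIndependent ℤ fun lam : {lam : Nat.Partition n // plexLE α lam} =>
        fun μ : {μ : Nat.Partition n // plexLE α μ} => X lam.1 μ.1) ∧
      Submodule.span ℤ (Set.range fun lam : {lam : Nat.Partition n // plexLE α lam} =>
          fun μ : {μ : Nat.Partition n // plexLE α μ} => X lam.1 μ.1) =
        Submodule.span ℤ (Set.range fun lam : Nat.Partition n =>
          fun μ : {μ : Nat.Partition n // plexLE α μ} => X lam μ.1)) ∧
    ((LinearIndependent ℤ fun lam : {lam : Nat.Partition n // plexLE α lam} =>
        fun μ : {μ : Nat.Partition n // plexLE α μ} => Xi lam.1 μ.1) ∧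
      Submodule.span ℤ (Set.range fun lam : {lam : Nat.Partition n // plexLE α lam} =>
          fun μ : {μ : Nat.Partition n // plexLE α μ} => Xi lam.1 μ.1) =
        Submodule.span ℤ (Set.range fun lam : Nat.Partition n =>
          fun μ : {μ : Nat.Partition n // plexLE α μ} => X lam μ.1)) := by
  classical
  obtain ⟨-, ⟨d, hd1, hd2, hd3⟩, -⟩ := hX
  -- triangularity facts for Xi
  have hXi_tri : ∀ lam μ : Nat.Partition n, Xi lam μ ≠ 0 → μ ≤ lam := by
    intro lam μ h
    have h' : permChar lam (T μ) ≠ 0 := by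
      intro hz
      apply h
      rw [hXi]
      simp [hz]
    have h2 := plexLE_of_permChar_ne_zero h'
    rw [hT μ] at h2
    exact plexLE_iff_le.1 h2
  have hXi_diag : ∀ lam : Nat.Partition n, Xi lam lam ≠ 0 := by
    intro lam
    rw [hXi]
    simp only [ne_eq, Nat.cast_eq_zero]
    exact permChar_self_ne_zero (hT lam)
  -- matrix machinery
  set D : Matrix (Nat.Partition n) (Nat.Partition n) ℤ := Matrix.of d with hD
  have hDtri : D.BlockTriangular id := by
    intro i j hij
    by_contra h
    exact absurd (plexLE_iff_le.1 (hd2 i j h)) (not_le.2 hij)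
  have hDdet1 : D.det = 1 := by
    rw [Matrix.det_of_upperTriangular hDtri]
    exact Finset.prod_eq_one fun i _ => hd1 i
  have hDdet : IsUnit D.det := by rw [hDdet1]; exact isUnit_one
  haveI : Invertible D := D.invertibleOfIsUnitDet hDdet
  set E := D⁻¹ with hE
  have hEtri : E.BlockTriangular id := Matrix.blockTriangular_inv_of_blockTriangular hDtri
  have hEdiag : ∀ i, E i i ≠ 0 := by
    intro i hzero
    have hdet : E.det = Ring.inverse D.det := Matrix.det_nonsing_inv D
    rw [hDdet1, Ring.inverse_one] at hdet
    have h1 : E.det = ∏ j, E j j := Matrix.det_of_upperTriangular hEtri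
    have h2 : (∏ j, E j j) = 0 :=
      Finset.prod_eq_zero (Finset.mem_univ i) (show (fun j => E j j) i = 0 from hzero)
    rw [hdet, h2] at h1
    exact one_ne_zero h1
  have hEtri' : ∀ i j, E i j ≠ 0 → i ≤ j := fun i j h =>
    not_lt.1 fun hij => h (hEtri hij)
  -- entrywise relations
  have hXiD : ∀ lam μ : Nat.Partition n, Xi lam μ = ∑ mu, d lam mu * X mu μ := by
    intro lam μ
    rw [hXi]
    have h3 := hd3 lam (T μ)
    rw [hT μ] at h3
    exact h3
  have hXmat : Matrix.of X = E * Matrix.of Xi := by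
    have h1 : Matrix.of Xi = D * Matrix.of X := by
      ext lam μ
      rw [Matrix.mul_apply]
      exact hXiD lam μ
    rw [h1, ← Matrix.mul_assoc, hE, Matrix.nonsing_inv_mul D hDdet, Matrix.one_mul]
  have hXE : ∀ lam μ : Nat.Partition n, X lam μ = ∑ mu, E lam mu * Xi mu μ := by
    intro lam μ
    have h4 := congrFun (congrFun hXmat lam) μ
    rw [Matrix.mul_apply] at h4
    exact h4
  -- restricted rows
  set rX : Nat.Partition n → ({μ : Nat.Partition n // plexLE α μ} → ℤ) :=
    fun lam => fun μ => X lam μ.1 with hrX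
  set rXi : Nat.Partition n → ({μ : Nat.Partition n // plexLE α μ} → ℤ) :=
    fun lam => fun μ => Xi lam μ.1 with hrXi
  have hvanish : ∀ lam : Nat.Partition n, ¬ plexLE α lam →
      ∀ μ : {μ : Nat.Partition n // plexLE α μ}, Xi lam μ.1 = 0 := by
    intro lam hlam μ
    by_contra h
    exact hlam (plexLE_iff_le.2 (le_trans (plexLE_iff_le.1 μ.2) (hXi_tri lam μ.1 h)))
  have hXiRow : ∀ lam : Nat.Partition n, rXi lam = ∑ mu, d lam mu • rX mu := by
    intro lam
    funext μ
    rw [Finset.sum_apply]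
    simp only [Pi.smul_apply, smul_eq_mul, hrX, hrXi]
    exact hXiD lam μ.1
  have hXRow : ∀ lam : Nat.Partition n, rX lam = ∑ mu, E lam mu • rXi mu := by
    intro lam
    funext μ
    rw [Finset.sum_apply]
    simp only [Pi.smul_apply, smul_eq_mul, hrX, hrXi]
    exact hXE lam μ.1
  -- span membership facts
  set SXi := Submodule.span ℤ (Set.range fun lam : {lam : Nat.Partition n // plexLE α lam} =>
      rXi lam.1) with hSXi
  set SX := Submodule.span ℤ (Set.range fun lam : {lam : Nat.Partition n // plexLE α lam} =>
      rX lam.1) with hSX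
  set SXall := Submodule.span ℤ (Set.range fun lam : Nat.Partition n => rX lam) with hSXall
  have M1 : ∀ lam : Nat.Partition n, rX lam ∈ SXi := by
    intro lam
    rw [hXRow lam]
    apply Submodule.sum_mem
    intro mu _
    by_cases hmu : plexLE α mu
    · exact Submodule.smul_mem _ _ (Submodule.subset_span ⟨⟨mu, hmu⟩, rfl⟩)
    · have h0 : rXi mu = 0 := funext fun μ => hvanish mu hmu μ
      rw [h0, smul_zero]
      exact Submodule.zero_mem _
  have M2 : ∀ lam : {lam : Nat.Partition n // plexLE α lam}, rXi lam.1 ∈ SX := by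
    intro lam
    rw [hXiRow lam.1]
    apply Submodule.sum_mem
    intro mu _
    by_cases hmu : plexLE α mu
    · exact Submodule.smul_mem _ _ (Submodule.subset_span ⟨⟨mu, hmu⟩, rfl⟩)
    · have hd0 : d lam.1 mu = 0 := by
        by_contra h
        exact hmu (plexLE_iff_le.2
          (le_trans (plexLE_iff_le.1 lam.2) (plexLE_iff_le.1 (hd2 _ _ h))))
      rw [hd0, zero_smul]
      exact Submodule.zero_mem _
  have M3 : ∀ lam : Nat.Partition n, rXi lam ∈ SXall := by
    intro lam
    rw [hXiRow lam]
    apply Submodule.sum_mem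
    intro mu _
    exact Submodule.smul_mem _ _ (Submodule.subset_span ⟨mu, rfl⟩)
  have M4 : ∀ lam : Nat.Partition n, rX lam ∈ SX := by
    intro lam
    have h2 : SXi ≤ SX := Submodule.span_le.2 (by rintro _ ⟨mu, rfl⟩; exact M2 mu)
    exact h2 (M1 lam)
  -- Xi linear independence
  have G3 : LinearIndependent ℤ fun lam : {lam : Nat.Partition n // plexLE α lam} =>
      rXi lam.1 := by
    rw [Fintype.linearIndependent_iff]
    intro c hc
    apply solve_triangular_max (fun lam μ : {lam : Nat.Partition n // plexLE α lam} =>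
      Xi lam.1 μ.1) (fun i => hXi_diag i.1)
      (fun i j h => Subtype.coe_le_coe.1 (hXi_tri i.1 j.1 h)) c
    intro j
    have h5 := congrFun hc j
    rw [Finset.sum_apply] at h5
    simpa using h5
  -- X linear independence
  have G1 : LinearIndependent ℤ fun lam : {lam : Nat.Partition n // plexLE α lam} =>
      rX lam.1 := by
    rw [Fintype.linearIndependent_iff]
    intro c hc
    set v : {lam : Nat.Partition n // plexLE α lam} → ℤ :=
      fun mu => ∑ lam : {lam : Nat.Partition n // plexLE α lam}, c lam * E lam.1 mu.1 with hv
    have hv0 : ∑ mu : {lam : Nat.Partition n // plexLE α lam}, v mu • rXi mu.1 = 0 := by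
      funext μ
      rw [Finset.sum_apply, Pi.zero_apply]
      have step1 : ∀ lam : {lam : Nat.Partition n // plexLE α lam},
          (∑ mu : {lam : Nat.Partition n // plexLE α lam}, E lam.1 mu.1 * Xi mu.1 μ.1)
            = X lam.1 μ.1 := by
        intro lam
        have hsub : ∑ mu ∈ Finset.univ.filter (fun mu : Nat.Partition n => plexLE α mu),
            E lam.1 mu * Xi mu μ.1
            = ∑ mu : {lam : Nat.Partition n // plexLE α lam}, E lam.1 mu.1 * Xi mu.1 μ.1 :=
          Finset.sum_subtype _ (fun x => by simp) _
        rw [← hsub]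
        rw [Finset.sum_filter]
        rw [hXE lam.1 μ.1]
        apply Finset.sum_congr rfl
        intro mu _
        by_cases hmu : plexLE α mu
        · rw [if_pos hmu]
        · rw [if_neg hmu, hvanish mu hmu μ, mul_zero]
      calc ∑ mu : {lam : Nat.Partition n // plexLE α lam}, v mu • rXi mu.1 μ
          = ∑ mu : {lam : Nat.Partition n // plexLE α lam},
              (∑ lam : {lam : Nat.Partition n // plexLE α lam}, c lam * E lam.1 mu.1)
                * Xi mu.1 μ.1 := by
            apply Finset.sum_congr rfl
            intro mu _
            simp [hv, hrXi]
        _ = ∑ lam : {lam : Nat.Partition n // plexLE α lam},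
              c lam * ∑ mu : {lam : Nat.Partition n // plexLE α lam},
                E lam.1 mu.1 * Xi mu.1 μ.1 := by
            simp_rw [Finset.sum_mul]
            rw [Finset.sum_comm]
            simp_rw [Finset.mul_sum, mul_assoc]
        _ = ∑ lam : {lam : Nat.Partition n // plexLE α lam}, c lam * X lam.1 μ.1 := by
            apply Finset.sum_congr rfl
            intro lam _
            rw [step1 lam]
        _ = 0 := by
            have h6 := congrFun hc μ
            rw [Finset.sum_apply, Pi.zero_apply] at h6
            simpa [hrX] using h6
    have hvz := Fintype.linearIndependent_iff.1 G3 v hv0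
    apply solve_triangular_min (fun lam mu : {lam : Nat.Partition n // plexLE α lam} =>
      E lam.1 mu.1) (fun i => hEdiag i.1)
      (fun i j h => Subtype.coe_le_coe.1 (hEtri' i.1 j.1 h)) c
    intro j
    exact hvz j
  refine ⟨⟨G1, ?_⟩, G3, ?_⟩
  · apply le_antisymm
    · exact Submodule.span_mono (by rintro _ ⟨lam, rfl⟩; exact ⟨lam.1, rfl⟩)
    · exact Submodule.span_le.2 (by rintro _ ⟨lam, rfl⟩; exact M4 lam)
  · apply le_antisymm
    · exact Submodule.span_le.2 (by rintro _ ⟨lam, rfl⟩; exact M3 lam.1)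
    · exact Submodule.span_le.2 (by rintro _ ⟨lam, rfl⟩; exact M1 lam)

end SnTable
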